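/- Let b = 2^ℓ, let A_0, …, A_{b-1} be r×r matrices over ℤ with A_{b-1} the identity, V an integer row vector of length r, and m_0, …, m_{b-1} positive integers with m_0 = 1. Define for 0 ≤ i ≤ ℓ and 0 ≤ j < 2^i: m_{i,j} = Π_{u=j·2^{ℓ-i}}^{(j+1)·2^{ℓ-i}-1} m_u, A_{i,j} = Π_{u=j·2^{ℓ-i}}^{(j+1)·2^{ℓ-i}-1} A_u, and C_{i,j} = V · A_{i,0} ⋯ A_{i,j-1} mod m_{i,j}. Then the recursions m_{i,j} = m_{i+1,2j} · m_{i+1,2j+1}, A_{i,j} = A_{i+1,2j} · A_{i+1,2j+1}, and C_{i+1,j} = C_{i,⌊j/2⌋} mod m_{i+1,j} for j even, C_{i+1,j} = C_{i,⌊j/2⌋} · A_{i+1,j-1} mod m_{i+1,j} for j odd, hold; in particular the RemainderTree algorithm correctly computes C_j = V A_0 ⋯ A_{j-1} mod m_j for all 0 ≤ j < b. -/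

import Mathlib

open Matrix Finset

/-- Componentwise reduction of an integer vector modulo a positive integer. -/
def vmod {r : ℕ} (w : Fin r → ℤ) (M : ℕ) : Fin r → ℤ := fun i => w i % (M : ℤ)

/-- Ordered product A_a · A_{a+1} ⋯ A_{b-1} of a sequence of matrices. -/
def prodA {r : ℕ} (A : ℕ → Matrix (Fin r) (Fin r) ℤ) (a b : ℕ) :
    Matrix (Fin r) (Fin r) ℤ :=
  ((List.range' a (b - a)).map A).prod


lemma prodA_mul {r : ℕ} (A : ℕ → Matrix (Fin r) (Fin r) ℤ) {a b c : ℕ}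
    (hab : a ≤ b) (hbc : b ≤ c) :
    prodA A a c = prodA A a b * prodA A b c := by
  unfold prodA
  rw [← List.prod_append, ← List.map_append]
  congr 1
  have := List.range'_append (s := a) (m := b - a) (n := c - b) (step := 1)
  rw [show a + 1 * (b - a) = b by omega] at this
  rw [show b - a + (c - b) = c - a by omega] at this
  exact congrArg (List.map A) this.symm

lemma vmod_vmod {r : ℕ} (w : Fin r → ℤ) {M M' : ℕ} (h : M' ∣ M) :
    vmod (vmod w M) M' = vmod w M' := by
  funext i
  simp only [vmod]
  exact Int.emod_emod_of_dvd _ (Int.natCast_dvd_natCast.mpr h)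

lemma vecMul_vmod {r : ℕ} (w : Fin r → ℤ) (B : Matrix (Fin r) (Fin r) ℤ)
    {M M' : ℕ} (h : M' ∣ M) :
    vmod (Matrix.vecMul (vmod w M) B) M' = vmod (Matrix.vecMul w B) M' := by
  funext i
  simp only [vmod, Matrix.vecMul, dotProduct]
  have : (∑ k, (w k % (M:ℤ)) * B k i) % (M':ℤ) = (∑ k, w k * B k i) % (M':ℤ) := by
    have hmod : ∀ k : Fin r, (w k % (M:ℤ)) * B k i ≡ w k * B k i [ZMOD (M':ℤ)] := by
      intro k
      have h1 : (w k % (M:ℤ)) ≡ w k [ZMOD (M:ℤ)] := Int.emod_emod_of_dvd _ dvd_rfl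
      exact ((h1.of_dvd (Int.natCast_dvd_natCast.mpr h)).mul_right _)
    calc (∑ k, (w k % (M:ℤ)) * B k i) % (M':ℤ)
        = (∑ k, ((w k % (M:ℤ)) * B k i) % (M':ℤ)) % (M':ℤ) := Finset.sum_int_mod _ _ _
      _ = (∑ k, (w k * B k i) % (M':ℤ)) % (M':ℤ) := by
          congr 1; exact Finset.sum_congr rfl fun k _ => hmod k
      _ = (∑ k, w k * B k i) % (M':ℤ) := (Finset.sum_int_mod _ _ _).symm
  exact this

/-- Correctness of the accumulating remainder tree: the product-tree recursions for the
moduli tree m_{i,j} and matrix tree A_{i,j} hold, the top-down recursion for C_{i,j} holds,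
and the leaves satisfy C_j = V·A₀⋯A_{j-1} mod m_j. -/
theorem remainderTree_correct (ℓ r : ℕ) (A : ℕ → Matrix (Fin r) (Fin r) ℤ)
    (m : ℕ → ℕ) (V : Fin r → ℤ) (hm0 : m 0 = 1) (hmpos : ∀ u, 0 < m u)
    (hAlast : A (2 ^ ℓ - 1) = 1) :
    let mnode : ℕ → ℕ → ℕ :=
      fun i j => ∏ u ∈ Finset.Ico (j * 2 ^ (ℓ - i)) ((j + 1) * 2 ^ (ℓ - i)), m u
    let Anode : ℕ → ℕ → Matrix (Fin r) (Fin r) ℤ :=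
      fun i j => prodA A (j * 2 ^ (ℓ - i)) ((j + 1) * 2 ^ (ℓ - i))
    let Cnode : ℕ → ℕ → (Fin r → ℤ) :=
      fun i j => vmod (Matrix.vecMul V (prodA A 0 (j * 2 ^ (ℓ - i)))) (mnode i j)
    (∀ i < ℓ, ∀ j < 2 ^ i,
        mnode i j = mnode (i + 1) (2 * j) * mnode (i + 1) (2 * j + 1)
        ∧ Anode i j = Anode (i + 1) (2 * j) * Anode (i + 1) (2 * j + 1))
    ∧ (∀ i < ℓ, ∀ j < 2 ^ (i + 1),
        Cnode (i + 1) j =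
          if j % 2 = 0 then vmod (Cnode i (j / 2)) (mnode (i + 1) j)
          else vmod (Matrix.vecMul (Cnode i (j / 2)) (Anode (i + 1) (j - 1)))
            (mnode (i + 1) j))
    ∧ (∀ j < 2 ^ ℓ, Cnode ℓ j = vmod (Matrix.vecMul V (prodA A 0 j)) (m j)) := by
  intro mnode Anode Cnode
  have hsplitm : ∀ i, i < ℓ → ∀ j : ℕ,
      mnode i j = mnode (i + 1) (2 * j) * mnode (i + 1) (2 * j + 1) := by
    intro i hi j
    simp only [mnode]
    have hk : ℓ - i = (ℓ - (i + 1)) + 1 := by omega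
    rw [hk]
    set k := ℓ - (i + 1) with hkdef
    rw [← Finset.prod_Ico_consecutive m
        (show j * 2 ^ (k + 1) ≤ (2 * j + 1) * 2 ^ k by
          have := Nat.one_le_two_pow (n := k); nlinarith [pow_succ 2 k])
        (show (2 * j + 1) * 2 ^ k ≤ (j + 1) * 2 ^ (k + 1) by
          nlinarith [pow_succ 2 k, Nat.one_le_two_pow (n := k)])]
    congr 2
    · rw [pow_succ]; ring
    · rw [pow_succ]; ring
  have hsplitA : ∀ i, i < ℓ → ∀ j : ℕ,
      Anode i j = Anode (i + 1) (2 * j) * Anode (i + 1) (2 * j + 1) := by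
    intro i hi j
    simp only [Anode]
    have hk : ℓ - i = (ℓ - (i + 1)) + 1 := by omega
    rw [hk]
    set k := ℓ - (i + 1) with hkdef
    rw [prodA_mul A
        (show j * 2 ^ (k + 1) ≤ (2 * j + 1) * 2 ^ k by
          nlinarith [pow_succ 2 k, Nat.one_le_two_pow (n := k)])
        (show (2 * j + 1) * 2 ^ k ≤ (j + 1) * 2 ^ (k + 1) by
          nlinarith [pow_succ 2 k, Nat.one_le_two_pow (n := k)])]
    congr 2
    · rw [pow_succ]; ring
    · rw [pow_succ]; ring
  refine ⟨fun i hi j _ => ⟨hsplitm i hi j, hsplitA i hi j⟩, ?_, ?_⟩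
  · intro i hi j hj
    obtain ⟨t, rfl | rfl⟩ := Nat.even_or_odd' j
    · -- even case
      rw [if_pos (by omega)]
      have hdvd : mnode (i + 1) (2 * t) ∣ mnode i t :=
        ⟨mnode (i + 1) (2 * t + 1), hsplitm i hi t⟩
      have ht2 : (2 * t) / 2 = t := by omega
      simp only [Cnode, ht2]
      rw [vmod_vmod _ hdvd]
      have : t * 2 ^ (ℓ - i) = 2 * t * 2 ^ (ℓ - (i + 1)) := by
        rw [show ℓ - i = (ℓ - (i + 1)) + 1 by omega, pow_succ]; ring
      rw [this]
    · -- odd case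
      rw [if_neg (by omega)]
      have hdvd : mnode (i + 1) (2 * t + 1) ∣ mnode i t :=
        ⟨mnode (i + 1) (2 * t), by rw [hsplitm i hi t]; ring⟩
      have ht2 : (2 * t + 1) / 2 = t := by omega
      have ht1 : 2 * t + 1 - 1 = 2 * t := by omega
      simp only [Cnode, ht2, ht1]
      rw [vecMul_vmod _ _ hdvd, Matrix.vecMul_vecMul]
      have hpow : t * 2 ^ (ℓ - i) = 2 * t * 2 ^ (ℓ - (i + 1)) := by
        rw [show ℓ - i = (ℓ - (i + 1)) + 1 by omega, pow_succ]; ring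
      rw [hpow]
      have hP : prodA A 0 (2 * t * 2 ^ (ℓ - (i + 1))) * Anode (i + 1) (2 * t) =
          prodA A 0 ((2 * t + 1) * 2 ^ (ℓ - (i + 1))) := by
        simp only [Anode]
        rw [← prodA_mul A (Nat.zero_le _)
          (Nat.mul_le_mul_right _ (by omega))]
      rw [hP]
  · intro j hj
    simp only [Cnode, mnode, Nat.sub_self, pow_zero, mul_one, Nat.Ico_succ_singleton, Finset.prod_singleton]
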